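/- arXiv:1506.07090 — 2 statements merged into one kernel-verified Lean document; each statement's English description precedes it below -/
import Mathlib

section
/- For s ≥ 1, a ∈ ℕ, λ ≥ 0, and monomials p(λ) = λᵐ, q(λ) = λⁿ with m + n ≥ a, the inequality Σ_{k=0}^{a} (C(a,k))^s D^{k,s}p(λ) · D^{a−k,s}q(λ) ≤ D^{a,s}(p(λ)q(λ)) holds, where D^{a,s}(λⁿ) = (n!/(n−a)!)^s λ^{n−a} and C(a,k) is the binomial coefficient. -/
/-- `D^{a,s}` applied to the monomial `λ^n`, namely `(n!/(n-a)!)^s λ^(n-a)`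
(which is `0` when `n < a` since then the descending factorial vanishes). -/
noncomputable def Dmon (s : ℝ) (a n : ℕ) (lam : ℝ) : ℝ :=
  ((n.descFactorial a : ℝ)) ^ s * lam ^ (n - a)

private lemma add_rpow_le_rpow_add' {p : ℝ} {x y : ℝ} (hx : 0 ≤ x) (hy : 0 ≤ y)
    (hp : 1 ≤ p) : x ^ p + y ^ p ≤ (x + y) ^ p := by
  lift x to NNReal using hx
  lift y to NNReal using hy
  have := NNReal.add_rpow_le_rpow_add x y hp
  exact_mod_cast this

private lemma sum_rpow_le_rpow_sum {p : ℝ} (hp : 1 ≤ p) (t : Finset ℕ) (f : ℕ → ℝ)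
    (hf : ∀ i ∈ t, 0 ≤ f i) : ∑ i ∈ t, (f i) ^ p ≤ (∑ i ∈ t, f i) ^ p := by
  induction t using Finset.cons_induction with
  | empty =>
    simp [Real.zero_rpow (by linarith : p ≠ 0)]
  | cons i t hi ih =>
    rw [Finset.sum_cons, Finset.sum_cons]
    have h1 : 0 ≤ f i := hf i (Finset.mem_cons_self i t)
    have h2 : 0 ≤ ∑ j ∈ t, f j :=
      Finset.sum_nonneg fun j hj => hf j (Finset.mem_cons_of_mem hj)
    calc f i ^ p + ∑ j ∈ t, f j ^ p ≤ f i ^ p + (∑ j ∈ t, f j) ^ p := by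
          gcongr
          exact ih fun j hj => hf j (Finset.mem_cons_of_mem hj)
      _ ≤ (f i + ∑ j ∈ t, f j) ^ p := add_rpow_le_rpow_add' h1 h2 hp

private lemma vandermonde_descFactorial (a m n : ℕ) :
    ∑ k ∈ Finset.range (a + 1),
        a.choose k * (m.descFactorial k * n.descFactorial (a - k))
      = (m + n).descFactorial a := by
  rw [Nat.descFactorial_eq_factorial_mul_choose, Nat.add_choose_eq,
    Finset.Nat.sum_antidiagonal_eq_sum_range_succ_mk, Finset.mul_sum]
  refine Finset.sum_congr rfl fun k hk => ?_
  have hk' : k ≤ a := Nat.lt_succ_iff.mp (Finset.mem_range.mp hk)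
  rw [Nat.descFactorial_eq_factorial_mul_choose m, Nat.descFactorial_eq_factorial_mul_choose n]
  rw [← Nat.choose_mul_factorial_mul_factorial hk']
  ring

theorem Dop_leibniz_upper (s : ℝ) (hs : 1 ≤ s) (a m n : ℕ) (ha : a ≤ m + n)
    (lam : ℝ) (hlam : 0 ≤ lam) :
    ∑ k ∈ Finset.range (a + 1),
        ((a.choose k : ℝ)) ^ s * Dmon s k m lam * Dmon s (a - k) n lam
      ≤ Dmon s a (m + n) lam := by
  have hs0 : s ≠ 0 := by linarith
  set f : ℕ → ℝ := fun k => (a.choose k * (m.descFactorial k * n.descFactorial (a - k)) : ℕ)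
  have hstep : ∀ k ∈ Finset.range (a + 1),
      (a.choose k : ℝ) ^ s * Dmon s k m lam * Dmon s (a - k) n lam
        ≤ (f k) ^ s * lam ^ (m + n - a) := by
    intro k hk
    have hk' : k ≤ a := Nat.lt_succ_iff.mp (Finset.mem_range.mp hk)
    unfold Dmon
    by_cases hkm : k ≤ m ∧ a - k ≤ n
    · have he : m - k + (n - (a - k)) = m + n - a := by omega
      have : (a.choose k : ℝ) ^ s * ((m.descFactorial k : ℝ) ^ s * lam ^ (m - k)) *
          ((n.descFactorial (a - k) : ℝ) ^ s * lam ^ (n - (a - k)))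
          = (f k) ^ s * lam ^ (m + n - a) := by
        rw [← he, pow_add]
        simp only [f]
        push_cast
        rw [Real.mul_rpow (by positivity) (by positivity),
          Real.mul_rpow (by positivity) (by positivity)]
        ring
      rw [this]
    · have hz : (m.descFactorial k : ℝ) = 0 ∨ (n.descFactorial (a - k) : ℝ) = 0 := by
        rcases not_and_or.mp hkm with h | h
        · left; exact_mod_cast Nat.descFactorial_eq_zero_iff_lt.mpr (by omega)
        · right; exact_mod_cast Nat.descFactorial_eq_zero_iff_lt.mpr (by omega)
      have hlhs : (a.choose k : ℝ) ^ s * ((m.descFactorial k : ℝ) ^ s * lam ^ (m - k)) *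
          ((n.descFactorial (a - k) : ℝ) ^ s * lam ^ (n - (a - k))) = 0 := by
        rcases hz with h | h <;> rw [h, Real.zero_rpow hs0] <;> ring
      rw [hlhs]
      positivity
  calc ∑ k ∈ Finset.range (a + 1),
        (a.choose k : ℝ) ^ s * Dmon s k m lam * Dmon s (a - k) n lam
      ≤ ∑ k ∈ Finset.range (a + 1), (f k) ^ s * lam ^ (m + n - a) :=
        Finset.sum_le_sum hstep
    _ = (∑ k ∈ Finset.range (a + 1), (f k) ^ s) * lam ^ (m + n - a) := by
        rw [Finset.sum_mul]
    _ ≤ (∑ k ∈ Finset.range (a + 1), f k) ^ s * lam ^ (m + n - a) := by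
        exact mul_le_mul_of_nonneg_right
          (sum_rpow_le_rpow_sum hs _ _ (fun i _ => by positivity)) (by positivity)
    _ = Dmon s a (m + n) lam := by
        unfold Dmon
        congr 2
        simp only [f]
        rw [← Nat.cast_sum]
        exact_mod_cast congrArg (Nat.cast : ℕ → ℝ) (vandermonde_descFactorial a m n)
end

section
/- For s ≥ 1, a ∈ ℕ, λ ≥ 0, and monomials p(λ) = λᵐ, q(λ) = λⁿ with m + n ≥ a, the inequality (1+a)^{1−s} D^{a,s}(p(λ)q(λ)) ≤ Σ_{k=0}^{a} (C(a,k))^s D^{k,s}p(λ) · D^{a−k,s}q(λ) holds. -/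
lemma descFactorial_vandermonde (a m n : ℕ) :
    (m + n).descFactorial a
      = ∑ k ∈ Finset.range (a + 1),
          a.choose k * m.descFactorial k * n.descFactorial (a - k) := by
  have h := Nat.add_choose_eq m n a
  rw [Finset.Nat.sum_antidiagonal_eq_sum_range_succ (fun i j => m.choose i * n.choose j)] at h
  rw [Nat.descFactorial_eq_factorial_mul_choose, h, Finset.mul_sum]
  refine Finset.sum_congr rfl fun k hk => ?_
  have hka : k ≤ a := Nat.lt_succ_iff.mp (Finset.mem_range.mp hk)
  rw [Nat.descFactorial_eq_factorial_mul_choose, Nat.descFactorial_eq_factorial_mul_choose]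
  rw [← Nat.choose_mul_factorial_mul_factorial hka]; ring

theorem Dop_leibniz_lower (s : ℝ) (hs : 1 ≤ s) (a m n : ℕ) (ha : a ≤ m + n)
    (lam : ℝ) (hlam : 0 ≤ lam) :
    ((1 : ℝ) + a) ^ (1 - s) * Dmon s a (m + n) lam
      ≤ ∑ k ∈ Finset.range (a + 1),
          ((a.choose k : ℝ)) ^ s * Dmon s k m lam * Dmon s (a - k) n lam := by
  have hs0 : s ≠ 0 := by linarith
  set T : ℕ → ℝ := fun k =>
    ((a.choose k : ℝ)) * (m.descFactorial k : ℝ) * (n.descFactorial (a - k) : ℝ) with hT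
  have hTnn : ∀ k, 0 ≤ T k := fun k => by positivity
  have hS : ((m + n).descFactorial a : ℝ) = ∑ k ∈ Finset.range (a + 1), T k := by
    rw [descFactorial_vandermonde a m n]
    push_cast
    rfl
  set c : ℝ := (1 : ℝ) + a with hc
  have hc1 : 1 ≤ c := by simp [hc]
  have hcpos : 0 < c := lt_of_lt_of_le one_pos hc1
  have hSnn : 0 ≤ ∑ k ∈ Finset.range (a + 1), T k :=
    Finset.sum_nonneg fun k _ => hTnn k
  -- Jensen
  have jensen : c ^ (1 - s) * (∑ k ∈ Finset.range (a + 1), T k) ^ s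
      ≤ ∑ k ∈ Finset.range (a + 1), (T k) ^ s := by
    have hw : ∑ _k ∈ Finset.range (a + 1), (1 / c) = 1 := by
      rw [Finset.sum_const, Finset.card_range]
      field_simp [hc]
      rw [nsmul_eq_mul, Nat.cast_add, Nat.cast_one, add_comm (a : ℝ) 1, ← hc,
        mul_one_div_cancel hcpos.ne']
    have h := Real.rpow_arith_mean_le_arith_mean_rpow (Finset.range (a + 1))
      (fun _ => 1 / c) T (fun i _ => by positivity) hw (fun i _ => hTnn i) hs
    rw [← Finset.mul_sum, ← Finset.mul_sum,
      Real.mul_rpow (by positivity) hSnn] at h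
    have h2 := mul_le_mul_of_nonneg_left h hcpos.le
    calc c ^ (1 - s) * (∑ k ∈ Finset.range (a + 1), T k) ^ s
        = c * ((1 / c) ^ s * (∑ k ∈ Finset.range (a + 1), T k) ^ s) := by
          rw [← mul_assoc, Real.div_rpow zero_le_one hcpos.le, Real.one_rpow,
            Real.rpow_sub hcpos, Real.rpow_one]
          field_simp
      _ ≤ c * (1 / c * ∑ k ∈ Finset.range (a + 1), (T k) ^ s) := h2
      _ = ∑ k ∈ Finset.range (a + 1), (T k) ^ s := by field_simp
  -- termwise identification
  have hterm : ∀ k ∈ Finset.range (a + 1),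
      (T k) ^ s * lam ^ (m + n - a)
        = ((a.choose k : ℝ)) ^ s * Dmon s k m lam * Dmon s (a - k) n lam := by
    intro k hk
    have hka : k ≤ a := Nat.lt_succ_iff.mp (Finset.mem_range.mp hk)
    by_cases hkm : k ≤ m
    · by_cases hkn : a - k ≤ n
      · have hexp : m + n - a = (m - k) + (n - (a - k)) := by omega
        rw [hT]
        simp only []
        rw [Real.mul_rpow (by positivity) (Nat.cast_nonneg _),
          Real.mul_rpow (Nat.cast_nonneg _) (Nat.cast_nonneg _), hexp, pow_add]
        unfold Dmon
        ring
      · have h0 : n.descFactorial (a - k) = 0 :=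
          Nat.descFactorial_eq_zero_iff_lt.mpr (by omega)
        rw [hT]
        simp [Dmon, h0, Real.zero_rpow hs0]
    · have h0 : m.descFactorial k = 0 :=
        Nat.descFactorial_eq_zero_iff_lt.mpr (by omega)
      rw [hT]
      simp [Dmon, h0, Real.zero_rpow hs0]
  calc ((1 : ℝ) + a) ^ (1 - s) * Dmon s a (m + n) lam
      = c ^ (1 - s) * (∑ k ∈ Finset.range (a + 1), T k) ^ s * lam ^ (m + n - a) := by
        unfold Dmon; rw [hS]; ring
    _ ≤ (∑ k ∈ Finset.range (a + 1), (T k) ^ s) * lam ^ (m + n - a) :=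
        mul_le_mul_of_nonneg_right jensen (by positivity)
    _ = ∑ k ∈ Finset.range (a + 1), (T k) ^ s * lam ^ (m + n - a) := by
        rw [Finset.sum_mul]
    _ = ∑ k ∈ Finset.range (a + 1),
          ((a.choose k : ℝ)) ^ s * Dmon s k m lam * Dmon s (a - k) n lam :=
        Finset.sum_congr rfl hterm
end
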